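/- Let u, v, u', v' be words such that u ∼_{k-1} u' but u is not k-binomially equivalent to u', and v ∼_k v'. Then u·v is not k-binomially equivalent to u'·v'. -/
import Mathlib

/-- Number of occurrences of the second word as a (scattered) subword of the first. -/
def binom {α : Type*} [DecidableEq α] : List α → List α → ℕ
  | _, [] => 1
  | [], _ :: _ => 0
  | a :: u, b :: v => binom u (b :: v) + if a = b then binom u v else 0

/-- k-binomial equivalence. -/
def BinEq {α : Type*} [DecidableEq α] (k : ℕ) (u v : List α) : Prop :=
  ∀ x : List α, x.length ≤ k → binom u x = binom v x

lemma binom_nil {α : Type*} [DecidableEq α] (u : List α) : binom u [] = 1 := by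
  cases u <;> simp [binom]

lemma binom_nil_cons {α : Type*} [DecidableEq α] (b : α) (x : List α) :
    binom [] (b :: x) = 0 := by simp [binom]

lemma binom_append {α : Type*} [DecidableEq α] (u v x : List α) :
    binom (u ++ v) x =
      ∑ n ∈ Finset.range (x.length + 1), binom u (x.take n) * binom v (x.drop n) := by
  induction u generalizing x with
  | nil =>
    simp only [List.nil_append]
    rw [Finset.sum_eq_single 0]
    · simp [binom_nil]
    · intro n hn hn0
      cases x with
      | nil => simp at hn; omega
      | cons b x' =>
        obtain ⟨m, rfl⟩ := Nat.exists_eq_succ_of_ne_zero hn0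
        simp [binom_nil_cons]
    · simp
  | cons a u ih =>
    cases x with
    | nil => simp [binom_nil]
    | cons b x' =>
      show binom (a :: (u ++ v)) (b :: x') = _
      rw [show binom (a :: (u ++ v)) (b :: x')
          = binom (u ++ v) (b :: x') + if a = b then binom (u ++ v) x' else 0 from rfl,
        ih, ih]
      conv_lhs => rw [Finset.sum_range_succ']
      conv_rhs => rw [Finset.sum_range_succ']
      have hthis : ∀ m, binom (a :: u) (b :: x'.take m)
          = binom u (b :: x'.take m) + if a = b then binom u (x'.take m) else 0 := fun _ => rfl
      simp only [List.take_succ_cons, List.drop_succ_cons, List.take_zero, List.drop_zero,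
        List.length_cons, binom_nil, hthis]
      by_cases hab : a = b
      · simp only [hab, if_true, add_mul, Finset.sum_add_distrib]
        ring
      · simp [hab]

lemma binEq_zero {α : Type*} [DecidableEq α] (u v : List α) : BinEq 0 u v := by
  intro x hx
  rw [List.length_eq_zero_iff.mp (Nat.le_zero.mp hx), binom_nil, binom_nil]

theorem binEq_append_not {α : Type*} [DecidableEq α] (k : ℕ) (u v u' v' : List α)
    (h₁ : BinEq (k - 1) u u') (h₂ : ¬ BinEq k u u') (h₃ : BinEq k v v') :
    ¬ BinEq k (u ++ v) (u' ++ v') := by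
  rcases Nat.eq_zero_or_pos k with rfl | hk
  · exact absurd (binEq_zero u u') h₂
  simp only [BinEq, not_forall] at h₂
  obtain ⟨x, hx, hne⟩ := h₂
  have hlen : x.length = k := by
    by_contra h
    exact hne (h₁ x (by omega))
  intro H
  have := H x hx
  rw [binom_append, binom_append, Finset.sum_range_succ, Finset.sum_range_succ] at this
  have hcong : ∑ n ∈ Finset.range x.length, binom u (x.take n) * binom v (x.drop n)
      = ∑ n ∈ Finset.range x.length, binom u' (x.take n) * binom v' (x.drop n) := by
    apply Finset.sum_congr rfl
    intro n hn
    rw [Finset.mem_range] at hn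
    rw [h₁ (x.take n) (by simp; omega), h₃ (x.drop n) (by simp; omega)]
  rw [hcong] at this
  have : binom u (x.take x.length) * binom v (x.drop x.length)
      = binom u' (x.take x.length) * binom v' (x.drop x.length) := by omega
  simp only [List.take_length, List.drop_length, binom_nil, mul_one] at this
  exact hne this
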